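/- Let S, T, C be finsets of ι and let a, b ∈ ι be distinct elements with a ∉ C, b ∉ C, a ∉ S ∪ T and b ∉ S ∪ T. Then (m_S * F_{C ∪ {a}}) * (m_T * F_{C ∪ {b}}) = m_{S ∪ T ∪ {a,b}} * F_C + m_{S ∪ T} * F_C + m_{S ∪ T ∪ {a,b}} in R (the semantic identity underlying multiplication rule 24 of the Multiplication Rewriting Principle, where U \ V = {a}, V \ U = {b} and U ∩ V = C). -/
import Mathlib


variable {ι : Type*} [DecidableEq ι]

/-- Monomial semantics: `m S` evaluates an assignment `a` to `∏ i ∈ S, a i`. -/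
def m (S : Finset ι) : (ι → ZMod 2) → ZMod 2 :=
  fun a => ∏ i ∈ S, a i

/-- Power-set sum semantics: `F U` evaluates `a` to the sum over nonempty subsets `A ⊆ U`
of `∏ i ∈ A, a i`. -/
def F (U : Finset ι) : (ι → ZMod 2) → ZMod 2 :=
  fun a => ∑ A ∈ U.powerset.erase ∅, ∏ i ∈ A, a i

lemma zmod2_idem : ∀ z : ZMod 2, z * z = z := by decide

set_option linter.unusedSectionVars false in
lemma prod_sq (U : Finset ι) (x : ι → ZMod 2) : m U x * m U x = m U x := by
  unfold m
  rw [← Finset.prod_mul_distrib]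
  exact Finset.prod_congr rfl fun i _ => zmod2_idem (x i)

lemma m_union (U V : Finset ι) (x : ι → ZMod 2) : m (U ∪ V) x = m U x * m V x := by
  have h := Finset.prod_union_inter (s₁ := U) (s₂ := V) (f := x)
  have hsub : U ∩ V ⊆ U ∪ V := (Finset.inter_subset_left).trans Finset.subset_union_left
  have h2 : m (U ∪ V) x * m (U ∩ V) x = m (U ∪ V) x := by
    unfold m
    rw [← Finset.prod_sdiff hsub, mul_assoc]
    congr 1
    exact prod_sq (U ∩ V) x
  calc m (U ∪ V) x = m (U ∪ V) x * m (U ∩ V) x := h2.symm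
    _ = m U x * m V x := h

lemma F_eq (U : Finset ι) (x : ι → ZMod 2) :
    F U x = (∑ A ∈ U.powerset, ∏ i ∈ A, x i) + 1 := by
  have h := Finset.sum_erase_add U.powerset (fun A => ∏ i ∈ A, x i)
    (Finset.empty_mem_powerset U)
  simp only [Finset.prod_empty] at h
  have h11 : (1 : ZMod 2) + 1 = 0 := by decide
  calc F U x = F U x + (1 + 1) := by rw [h11, add_zero]
    _ = (F U x + 1) + 1 := by ring
    _ = (∑ A ∈ U.powerset, ∏ i ∈ A, x i) + 1 := by rw [show F U x + 1 = _ from h]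

lemma g_insert (a : ι) (C : Finset ι) (ha : a ∉ C) (x : ι → ZMod 2) :
    ∑ A ∈ (insert a C).powerset, ∏ i ∈ A, x i
      = (∑ A ∈ C.powerset, ∏ i ∈ A, x i) * (1 + x a) := by
  rw [Finset.sum_powerset_insert ha]
  have : ∀ A ∈ C.powerset, ∏ i ∈ insert a A, x i = x a * ∏ i ∈ A, x i := by
    intro A hA
    have haA : a ∉ A := fun h => ha (Finset.mem_powerset.mp hA h)
    rw [Finset.prod_insert haA]
  rw [Finset.sum_congr rfl this, ← Finset.mul_sum]
  ring

lemma key : ∀ g s t A B : ZMod 2,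
    (s * (g * (1 + A) + 1)) * (t * (g * (1 + B) + 1))
      = s * t * (A * B) * (g + 1) + s * t * (g + 1) + s * t * (A * B) := by decide

theorem stmt18 (S T C : Finset ι) (a b : ι)
    (hab : a ≠ b) (haC : a ∉ C) (hbC : b ∉ C)
    (haST : a ∉ S ∪ T) (hbST : b ∉ S ∪ T) :
    (m S * F (C ∪ {a})) * (m T * F (C ∪ {b}))
      = m (S ∪ T ∪ {a, b}) * F C + m (S ∪ T) * F C + m (S ∪ T ∪ {a, b}) := by
  funext x
  have hCa : C ∪ {a} = insert a C := by
    rw [Finset.union_comm, ← Finset.insert_eq]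
  have hCb : C ∪ {b} = insert b C := by
    rw [Finset.union_comm, ← Finset.insert_eq]
  have hFa : F (C ∪ {a}) x = (∑ A ∈ C.powerset, ∏ i ∈ A, x i) * (1 + x a) + 1 := by
    rw [hCa, F_eq, g_insert a C haC]
  have hFb : F (C ∪ {b}) x = (∑ A ∈ C.powerset, ∏ i ∈ A, x i) * (1 + x b) + 1 := by
    rw [hCb, F_eq, g_insert b C hbC]
  have hFC : F C x = (∑ A ∈ C.powerset, ∏ i ∈ A, x i) + 1 := F_eq C x
  have hmab : m ({a, b} : Finset ι) x = x a * x b := by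
    unfold m
    rw [show ({a, b} : Finset ι) = insert a {b} from rfl,
      Finset.prod_insert (by simpa using hab), Finset.prod_singleton]
  have hmST : m (S ∪ T) x = m S x * m T x := m_union S T x
  have hmSTab : m (S ∪ T ∪ {a, b}) x = m S x * m T x * (x a * x b) := by
    rw [m_union, hmST, hmab]
  show (m S x * F (C ∪ {a}) x) * (m T x * F (C ∪ {b}) x)
      = m (S ∪ T ∪ {a, b}) x * F C x + m (S ∪ T) x * F C x + m (S ∪ T ∪ {a, b}) x
  rw [hFa, hFb, hFC, hmST, hmSTab]
  have := key (∑ A ∈ C.powerset, ∏ i ∈ A, x i) (m S x) (m T x) (x a) (x b)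
  linear_combination this
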